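/- Let L be a tense logic extending S4.3_t. Then L ⊆ L^↑ if and only if dep(L) = ℵ0, where L^↑ = ⋂_{n≥1} Log(𝔠_n) is the tense logic of all finite chains. -/

import Mathlib

/-! ## Syntax of tense logic -/

inductive TForm : Type
  | var : ℕ → TForm
  | bot : TForm
  | imp : TForm → TForm → TForm
  | box : TForm → TForm
  | bdia : TForm → TForm
  deriving DecidableEq

namespace TForm

def neg (φ : TForm) : TForm := imp φ bot

def top : TForm := neg bot

def orf (φ ψ : TForm) : TForm := imp (neg φ) ψ

def andf (φ ψ : TForm) : TForm := neg (imp φ (neg ψ))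

def dia (φ : TForm) : TForm := neg (box (neg φ))

def bbox (φ : TForm) : TForm := neg (bdia (neg φ))

def subst (s : ℕ → TForm) : TForm → TForm
  | var n => s n
  | bot => bot
  | imp φ ψ => imp (subst s φ) (subst s ψ)
  | box φ => box (subst s φ)
  | bdia φ => bdia (subst s φ)

/-- Modal degree of a formula. -/
def mdeg : TForm → ℕ
  | var _ => 0
  | bot => 0
  | imp φ ψ => max (mdeg φ) (mdeg ψ)
  | box φ => mdeg φ + 1
  | bdia φ => mdeg φ + 1

end TForm

open TForm

/-! ## Frames and relational notions -/

/-- `R[U] = {z : ∃ y ∈ U, R y z}`. -/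
def Rimg {X : Type*} (R : X → X → Prop) (U : Set X) : Set X := {z | ∃ y ∈ U, R y z}

/-- `R[x]`, the set of `R`-successors of `x`. -/
def rsucc {X : Type*} (R : X → X → Prop) (x : X) : Set X := {y | R x y}

/-- `R̆[x]`, the set of `R`-predecessors of `x`. -/
def rpred {X : Type*} (R : X → X → Prop) (x : X) : Set X := {y | R y x}

/-- `R_♯^k[x]`. -/
def rsharp {X : Type*} (R : X → X → Prop) : ℕ → X → Set X
  | 0, x => {x}
  | k+1, x => rsharp R k x ∪ Rimg R (rsharp R k x) ∪ Rimg (flip R) (rsharp R k x)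

/-- `R_♯^ω[x]`. -/
def rsharpOmega {X : Type*} (R : X → X → Prop) (x : X) : Set X := ⋃ k : ℕ, rsharp R k x

/-- A frame is rooted if it is generated by a single point under `R` and its converse. -/
def Rooted {X : Type*} (R : X → X → Prop) : Prop := ∃ x : X, ∀ y : X, y ∈ rsharpOmega R x

/-- A frame is image-finite if `R_♯^1[x]` is finite for every `x`. -/
def ImageFinite {X : Type*} (R : X → X → Prop) : Prop := ∀ x : X, (rsharp R 1 x).Finite

/-! ## Semantics -/

def TSat {X : Type*} (R : X → X → Prop) (V : ℕ → Set X) : TForm → Set X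
  | .var n => V n
  | .bot => ∅
  | .imp φ ψ => (TSat R V φ)ᶜ ∪ TSat R V ψ
  | .box φ => {x | ∀ y, R x y → y ∈ TSat R V φ}
  | .bdia φ => {x | ∃ y, R y x ∧ y ∈ TSat R V φ}

/-- `φ` is valid at the point `x` of the frame `(X,R)`. -/
def ValidAt {X : Type*} (R : X → X → Prop) (x : X) (φ : TForm) : Prop :=
  ∀ V : ℕ → Set X, x ∈ TSat R V φ

/-- `φ` is valid in the frame `(X,R)`. -/
def Valid {X : Type*} (R : X → X → Prop) (φ : TForm) : Prop :=
  ∀ (V : ℕ → Set X) (x : X), x ∈ TSat R V φ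

/-- The tense logic of a frame. -/
def FrameLog {X : Type*} (R : X → X → Prop) : Set TForm := {φ | Valid R φ}

/-! ## Tense logics -/

/-- `φ` is a substitution instance of a classical propositional tautology. -/
def IsTautInstance (φ : TForm) : Prop :=
  ∀ v : TForm → Prop, ¬ v .bot → (∀ ψ χ, v (.imp ψ χ) ↔ (v ψ → v χ)) → v φ

/-- A (normal) tense logic. -/
structure TenseLogic (L : Set TForm) : Prop where
  taut_mem : ∀ φ, IsTautInstance φ → φ ∈ L
  adjoint : ∀ φ ψ : TForm, TForm.imp (.bdia φ) ψ ∈ L ↔ TForm.imp φ (.box ψ) ∈ L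
  mp : ∀ φ ψ : TForm, TForm.imp φ ψ ∈ L → φ ∈ L → ψ ∈ L
  subst_mem : ∀ φ ∈ L, ∀ s : ℕ → TForm, TForm.subst s φ ∈ L

def Consistent (L : Set TForm) : Prop := TForm.bot ∉ L

/-- A logic is tabular if it is the logic of some finite (nonempty) frame. -/
def Tabular (L : Set TForm) : Prop :=
  ∃ (X : Type) (_ : Finite X) (_ : Nonempty X) (R : X → X → Prop), L = FrameLog R

/-- A logic is pretabular if it is not tabular while every proper consistent
tense-logic extension of it is tabular. -/
def Pretabular (L : Set TForm) : Prop :=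
  ¬ Tabular L ∧
    ∀ L' : Set TForm, TenseLogic L' → L ⊆ L' → L ≠ L' → Consistent L' → Tabular L'

/-- The set of pretabular tense logics extending `L0`. -/
def PTAB (L0 : Set TForm) : Set (Set TForm) :=
  {L | TenseLogic L ∧ L0 ⊆ L ∧ Pretabular L}

/-! ## Some formulas -/

def bigConj : List TForm → TForm
  | [] => TForm.top
  | φ :: l => andf φ (bigConj l)

def bigDisj : List TForm → TForm
  | [] => TForm.bot
  | φ :: l => orf φ (bigDisj l)

/-- `Δ^k φ`. -/
def tdelta : ℕ → TForm → TForm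
  | 0, φ => φ
  | k+1, φ => orf (tdelta k φ) (orf (dia (tdelta k φ)) (TForm.bdia (tdelta k φ)))

/-- `∇^k φ = ¬Δ^k¬φ`. -/
def tnabla (k : ℕ) (φ : TForm) : TForm := neg (tdelta k (neg φ))

/-- `ψ_i = ¬p_0 ∧ ⋯ ∧ ¬p_{i-1} ∧ p_i`. -/
def tpsi (i : ℕ) : TForm :=
  bigConj (((List.range i).map fun j => neg (var j)) ++ [var i])

/-- `tab^T_n = ¬(Δ^n ψ_0 ∧ ⋯ ∧ Δ^n ψ_n)`. -/
def tabT (n : ℕ) : TForm :=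
  neg (bigConj ((List.range (n+1)).map fun i => tdelta n (tpsi i)))

/-! ## General frames -/

structure IsGeneralFrame {X : Type*} (R : X → X → Prop) (A : Set (Set X)) : Prop where
  empty_mem : ∅ ∈ A
  inter_mem : ∀ U ∈ A, ∀ V ∈ A, U ∩ V ∈ A
  compl_mem : ∀ U ∈ A, Uᶜ ∈ A
  fimg_mem : ∀ U ∈ A, Rimg R U ∈ A
  bimg_mem : ∀ U ∈ A, Rimg (flip R) U ∈ A

def Differentiated {X : Type*} (A : Set (Set X)) : Prop :=
  ∀ x y : X, x ≠ y → ∃ U ∈ A, x ∈ U ∧ y ∉ U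

def Tight {X : Type*} (R : X → X → Prop) (A : Set (Set X)) : Prop :=
  ∀ x y : X, ¬ R x y →
    ∃ U ∈ A, ∃ V ∈ A, (x ∈ U ∧ x ∉ Rimg (flip R) V) ∧ (y ∈ V ∧ y ∉ Rimg R U)

/-- Validity in a general frame: truth at all points under all valuations into `A`. -/
def GValid {X : Type*} (R : X → X → Prop) (A : Set (Set X)) (φ : TForm) : Prop :=
  ∀ V : ℕ → Set X, (∀ n, V n ∈ A) → ∀ x, x ∈ TSat R V φ

/-- Validity at a point of a general frame. -/
def GValidAt {X : Type*} (R : X → X → Prop) (A : Set (Set X)) (x : X) (φ : TForm) : Prop :=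
  ∀ V : ℕ → Set X, (∀ n, V n ∈ A) → x ∈ TSat R V φ

/-! ## (Local) t-morphisms -/

/-- Domain of a partial function. -/
def pdom {X Y : Type*} (f : X → Option Y) : Set X := {x | (f x).isSome}

/-- Image of a set under a partial function. -/
def pimg {X Y : Type*} (f : X → Option Y) (S : Set X) : Set Y := {y | ∃ x ∈ S, f x = some y}

/-- Range of a partial function. -/
def pran {X Y : Type*} (f : X → Option Y) : Set Y := {y | ∃ x, f x = some y}

/-- `f` is a `k`-t-morphism from `((X,R),x)` to `((Y,S),y)`. -/
def IsKTMorphism {X Y : Type*} (R : X → X → Prop) (S : Y → Y → Prop)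
    (f : X → Option Y) (x : X) (y : Y) (k : ℕ) : Prop :=
  rsharp R k x ⊆ pdom f ∧ f x = some y ∧
    ∀ z ∈ rsharp R (k-1) x, ∀ z' : Y, f z = some z' →
      pimg f (rsucc R z) = rsucc S z' ∧ pimg f (rpred R z) = rpred S z'

/-- A (total) t-morphism between frames. -/
def IsTMorphism {X Y : Type*} (R : X → X → Prop) (S : Y → Y → Prop) (f : X → Y) : Prop :=
  ∀ x : X, f '' rsucc R x = rsucc S (f x) ∧ f '' rpred R x = rpred S (f x)

/-! ## Generalized Jankov formulas -/

def finPairs (n : ℕ) : List (Fin n × Fin n) :=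
  (List.finRange n).flatMap fun i => (List.finRange n).map fun j => (i, j)

open Classical in
/-- The generalized Jankov formula `𝒥^k(𝔊,y)`, relative to an enumeration
`e : Fin n → Y` of `S_♯^k[y]` with `e 0 = y`. -/
noncomputable def jankov {Y : Type*} (S : Y → Y → Prop) (k n : ℕ) (e : Fin n → Y) : TForm :=
  andf (andf (TForm.var 0) (tnabla k (bigDisj ((List.finRange n).map fun i => TForm.var i.val))))
    (andf
      (bigConj (((finPairs n).filter fun p => decide (p.1 ≠ p.2)).map fun p =>
        tnabla k (TForm.imp (.var p.1.val) (neg (.var p.2.val)))))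
      (andf
        (bigConj (((finPairs n).filter fun p => decide (S (e p.1) (e p.2))).map fun p =>
          tnabla (k-1) (andf (TForm.imp (.var p.1.val) (dia (.var p.2.val)))
            (TForm.imp (.var p.2.val) (.bdia (.var p.1.val))))))
        (bigConj (((finPairs n).filter fun p => decide (¬ S (e p.1) (e p.2))).map fun p =>
          tnabla (k-1) (andf (TForm.imp (.var p.1.val) (neg (dia (.var p.2.val))))
            (TForm.imp (.var p.2.val) (neg (.bdia (.var p.1.val)))))))))

/-! ## Bounded-parameter formulas -/

/-- `bz_n = Δ^{n+1}p → Δ^n p`. -/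
def bz (n : ℕ) : TForm := TForm.imp (tdelta (n+1) (var 0)) (tdelta n (var 0))

def offDiag (n : ℕ) : List (Fin n × Fin n) :=
  (finPairs n).filter fun p => decide (p.1 ≠ p.2)

/-- `bw^+_n`. -/
def bwp (n : ℕ) : TForm :=
  TForm.imp (bigConj ((List.finRange (n+1)).map fun i => dia (var i.val)))
    (bigDisj ((offDiag (n+1)).map fun p =>
      dia (andf (var p.1.val) (orf (var p.2.val) (dia (var p.2.val))))))

/-- `bw^-_n`. -/
def bwm (n : ℕ) : TForm :=
  TForm.imp (bigConj ((List.finRange (n+1)).map fun i => TForm.bdia (var i.val)))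
    (bigDisj ((offDiag (n+1)).map fun p =>
      TForm.bdia (andf (var p.1.val) (orf (var p.2.val) (TForm.bdia (var p.2.val))))))

/-- `bd_n` (with `bd_0 := ⊤`, unused). -/
def bd : ℕ → TForm
  | 0 => TForm.top
  | 1 => TForm.imp (dia (box (var 0))) (var 0)
  | k+2 => TForm.imp (dia (andf (box (var (k+1))) (neg (bd (k+1))))) (var (k+1))

/-- Every strict chain inside `R[x]` has length at most `n` (`dep(x) ≤ n`). -/
def depLe {X : Type*} (R : X → X → Prop) (x : X) (n : ℕ) : Prop :=
  ∀ (m : ℕ) (c : Fin m → X), (∀ i, R x (c i)) →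
    (∀ i j : Fin m, i < j → R (c i) (c j) ∧ ¬ R (c j) (c i)) → m ≤ n

/-- Every antichain inside `R[x]` has size at most `n` (`wid^+(x) ≤ n`). -/
def widPlusLe {X : Type*} (R : X → X → Prop) (x : X) (n : ℕ) : Prop :=
  ∀ (m : ℕ) (c : Fin m → X), Function.Injective c → (∀ i, R x (c i)) →
    (∀ i j : Fin m, i ≠ j → ¬ R (c i) (c j)) → m ≤ n

/-- `wid^-(x) ≤ n`. -/
def widMinusLe {X : Type*} (R : X → X → Prop) (x : X) (n : ℕ) : Prop :=
  widPlusLe (flip R) x n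

/-- `zdg(x) ≤ n`. -/
def zdgLe {X : Type*} (R : X → X → Prop) (x : X) (n : ℕ) : Prop :=
  rsharp R n x = rsharpOmega R x

/-! ## Axiomatically presented logics -/

/-- The least tense logic containing `Γ` (i.e. `K_t ⊕ Γ`). -/
def TLogicGen (Γ : Set TForm) : Set TForm := ⋂₀ {L : Set TForm | TenseLogic L ∧ Γ ⊆ L}

def axT : TForm := TForm.imp (box (var 0)) (var 0)

def ax4 : TForm := TForm.imp (box (var 0)) (box (box (var 0)))

/-- `S4_t`. -/
def S4t : Set TForm := TLogicGen {axT, ax4}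

/-- `S4BP^{k,l}_{n,m}` with all parameters finite. -/
def S4BPfin (k l n m : ℕ) : Set TForm := TLogicGen {axT, ax4, bd k, bz l, bwp n, bwm m}

/-- `S4BP^{k,ω}_{n,m}` (no bound on z-degree: `bz_ω = ⊤`). -/
def S4BPko (k n m : ℕ) : Set TForm := TLogicGen {axT, ax4, bd k, bwp n, bwm m}

/-- `S4.3_t = S4BP^{ω,1}_{1,1}`. -/
def S43t : Set TForm := TLogicGen {axT, ax4, bz 1, bwp 1, bwm 1}

/-- `S4BP^{2,ω}_{2,2}`. -/
def S4BP2w22 : Set TForm := TLogicGen {axT, ax4, bd 2, bwp 2, bwm 2}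

/-- `S4BP^{2,ω}_{2,3}`. -/
def S4BP2w23 : Set TForm := TLogicGen {axT, ax4, bd 2, bwp 2, bwm 3}

/-- `S5_t = S4_t ⊕ (◇p → □◇p)`. -/
def S5t : Set TForm := TLogicGen {axT, ax4, TForm.imp (dia (var 0)) (box (dia (var 0)))}

/-- Kripke completeness: `L` is the logic of the class of Kripke frames validating `L`. -/
def KripkeComplete (L : Set TForm) : Prop :=
  L = {φ | ∀ (X : Type) (R : X → X → Prop), Nonempty X → (∀ ψ ∈ L, Valid R ψ) → Valid R φ}

/-- The finite model property: `L` is the logic of the class of finite frames validating `L`. -/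
def HasFMP (L : Set TForm) : Prop :=
  L = {φ | ∀ (X : Type) (R : X → X → Prop), Finite X → Nonempty X →
        (∀ ψ ∈ L, Valid R ψ) → Valid R φ}

/-! ## Skeletons and pre-skeletons -/

/-- A skeleton: a preorder frame all of whose clusters are singletons. -/
def IsSkeleton {X : Type*} (R : X → X → Prop) : Prop :=
  Reflexive R ∧ Transitive R ∧ ∀ y z : X, R y z → R z y → y = z

/-- Membership in the blown-up cluster `C^x_λ = {x} ∪ N`. -/
def inCl {X N : Type*} (x : X) : X ⊕ N → Prop
  | .inl u => u = x
  | .inr _ => True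

/-- The relation of the pre-skeleton `𝔉^x_λ`, where the fresh points are indexed by `N`:
`R ∪ (C^x_λ × R[x]) ∪ (R̆[x] × C^x_λ) ∪ (C^x_λ × C^x_λ)`. -/
def preRel {X : Type*} (N : Type*) (R : X → X → Prop) (x : X) : X ⊕ N → X ⊕ N → Prop :=
  fun a b =>
    (∃ u v, a = Sum.inl u ∧ b = Sum.inl v ∧ R u v) ∨
    (inCl x a ∧ ∃ v, b = Sum.inl v ∧ R x v) ∨
    (inCl x b ∧ ∃ u, a = Sum.inl u ∧ R u x) ∨
    (inCl x a ∧ inCl x b)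

/-- c-irreducibility of the pre-skeleton `𝔉^x_1`: every t-morphic image of `𝔉^x_1` is
isomorphic to `𝔉^x_1` or is a t-morphic image of `𝔉`. -/
def CIrrOne {X : Type} (R : X → X → Prop) (x : X) : Prop :=
  ∀ (Y : Type) (S : Y → Y → Prop),
    (∃ f : X ⊕ Fin 1 → Y, Function.Surjective f ∧ IsTMorphism (preRel (Fin 1) R x) S f) →
    ((∃ g : X ⊕ Fin 1 → Y, Function.Bijective g ∧ IsTMorphism (preRel (Fin 1) R x) S g) ∨
     (∃ h : X → Y, Function.Surjective h ∧ IsTMorphism R S h))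

/-- c-irreducibility of the pre-skeleton `𝔉^x_ω`: every t-morphic image of `𝔉^x_ω` is
isomorphic to `𝔉^x_m` for some `0 < m ≤ ω` or is a t-morphic image of `𝔉`. -/
def CIrrOmega {X : Type} (R : X → X → Prop) (x : X) : Prop :=
  ∀ (Y : Type) (S : Y → Y → Prop),
    (∃ f : X ⊕ ℕ → Y, Function.Surjective f ∧ IsTMorphism (preRel ℕ R x) S f) →
    ((∃ m : ℕ, 0 < m ∧ ∃ g : X ⊕ Fin m → Y, Function.Bijective g ∧
        IsTMorphism (preRel (Fin m) R x) S g) ∨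
     (∃ g : X ⊕ ℕ → Y, Function.Bijective g ∧ IsTMorphism (preRel ℕ R x) S g) ∨
     (∃ h : X → Y, Function.Surjective h ∧ IsTMorphism R S h))

/-! ## Chains, garlands -/

/-- The chain `𝔠_n = ({0,…,n-1}, ≥)`. -/
def chainR (n : ℕ) : Fin n → Fin n → Prop := fun i j => j ≤ i

/-- `L^↑ = ⋂_{n ≥ 1} Log(𝔠_n)`, the tense logic of all finite chains. -/
def Lup : Set TForm := ⋂ n : ℕ, FrameLog (chainR (n+1))

def Lcirc : Set TForm := FrameLog (preRel ℕ (chainR 1) (0 : Fin 1))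

def Lplus : Set TForm := FrameLog (preRel ℕ (chainR 2) (1 : Fin 2))

def Lminus : Set TForm := FrameLog (preRel ℕ (chainR 2) (0 : Fin 2))

def Lpm : Set TForm := FrameLog (preRel ℕ (chainR 3) (1 : Fin 3))

/-- The frame `𝔊_ℤ`. -/
def Rz : ℤ → ℤ → Prop := fun i j => i = j ∨ (Odd i ∧ (j = i - 1 ∨ j = i + 1))

/-- `Ga = Log(𝔊_ℤ)`. -/
def Ga : Set TForm := FrameLog Rz

/-- The garland `𝔊_n` on `{0,…,n}`. -/
def garR (n : ℕ) : Fin (n+1) → Fin (n+1) → Prop :=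
  fun i j => i = j ∨ (Odd (i : ℕ) ∧ ((j : ℕ) + 1 = (i : ℕ) ∨ (j : ℕ) = (i : ℕ) + 1))

/-! ## Generalized Thue–Morse sequences -/

/-- Endpoints `(lo, hi)` of the domain of the stage-`k` approximation `χ^f_k`. -/
def tmBnd : ℕ → ℤ × ℤ
  | 0 => (0, 2)
  | k+1 =>
      let ab := tmBnd k
      if k % 2 = 0 then (ab.1, ab.2 + (ab.2 - ab.1 + 1) + 1)
      else (ab.1 - (ab.2 - ab.1 + 1) - 1, ab.2)

/-- Value of the stage-`k` approximation `χ^f_k` (junk outside its domain). -/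
def tmVal (f : ℕ → Bool) : ℕ → ℤ → Bool
  | 0, j => decide (j = 2)
  | k+1, j =>
      let a := (tmBnd k).1
      let b := (tmBnd k).2
      if k % 2 = 0 then
        if j ≤ b then tmVal f k j
        else if j = b + 1 then f k
        else ! tmVal f k (j - (b + 2) + a)
      else
        if a ≤ j then tmVal f k j
        else if j = a - 1 then f k
        else ! tmVal f k (j + (b - a + 1) + 1)

/-- The generalized Thue–Morse sequence `χ^f : ℤ → Bool` generated by `f`
(evaluated at a stage whose domain certainly contains the argument). -/
def chi (f : ℕ → Bool) : ℤ → Bool := fun j => tmVal f (2 * j.natAbs + 2) j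

/-- `α` is finitely perfect: for every finite subsequence `β = α↾[c,d]` there is `n ∈ ω`
such that `β` embeds into every finite subsequence `ζ = α↾[c',d']` with `|dom ζ| > n`. -/
def FinitelyPerfect (α : ℤ → Bool) : Prop :=
  ∀ c d : ℤ, ∃ n : ℕ, ∀ c' d' : ℤ, (n : ℤ) < d' - c' + 1 →
    ∃ s : ℤ, c' ≤ c + s ∧ d + s ≤ d' ∧ ∀ j : ℤ, c ≤ j → j ≤ d → α j = α (j + s)

/-- `dep(L) = ℵ0`: for every `n` there is a refined general frame validating `L`
containing a strict chain of length `n` inside some `R[x]`. -/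
def DepInfinite (L : Set TForm) : Prop :=
  ∀ n : ℕ, ∃ (X : Type) (R : X → X → Prop) (A : Set (Set X)),
    Nonempty X ∧ IsGeneralFrame R A ∧ Differentiated A ∧ Tight R A ∧
    (∀ φ ∈ L, GValid R A φ) ∧
    ∃ (x : X) (c : Fin n → X), (∀ i, R x (c i)) ∧
      ∀ i j : Fin n, i < j → R (c i) (c j) ∧ ¬ R (c j) (c i)

open TForm

section Sem
variable {X : Type*} {R : X → X → Prop} {V : ℕ → Set X} {w : X}

lemma mem_TSat_imp {φ ψ} : w ∈ TSat R V (.imp φ ψ) ↔ (w ∈ TSat R V φ → w ∈ TSat R V ψ) := by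
  simp [TSat, imp_iff_not_or]

lemma mem_TSat_neg {φ} : w ∈ TSat R V (neg φ) ↔ w ∉ TSat R V φ := by
  simp [TForm.neg, TSat]

lemma mem_TSat_andf {φ ψ} : w ∈ TSat R V (andf φ ψ) ↔ (w ∈ TSat R V φ ∧ w ∈ TSat R V ψ) := by
  simp [TForm.andf, TForm.neg, TSat]

lemma mem_TSat_orf {φ ψ} : w ∈ TSat R V (orf φ ψ) ↔ (w ∈ TSat R V φ ∨ w ∈ TSat R V ψ) := by
  simp [TForm.orf, TForm.neg, TSat]

lemma mem_TSat_dia {φ} : w ∈ TSat R V (dia φ) ↔ ∃ v, R w v ∧ v ∈ TSat R V φ := by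
  simp [TForm.dia, TForm.neg, TSat]

lemma mem_TSat_bdia {φ} : w ∈ TSat R V (.bdia φ) ↔ ∃ v, R v w ∧ v ∈ TSat R V φ := by
  simp [TSat]

lemma mem_TSat_box {φ} : w ∈ TSat R V (.box φ) ↔ ∀ v, R w v → v ∈ TSat R V φ := by
  simp [TSat]

lemma mem_TSat_var {n} : w ∈ TSat R V (.var n) ↔ w ∈ V n := Iff.rfl

lemma mem_TSat_td1 {φ} : w ∈ TSat R V (tdelta 1 φ) ↔
    (w ∈ TSat R V φ ∨ (∃ v, R w v ∧ v ∈ TSat R V φ) ∨ (∃ v, R v w ∧ v ∈ TSat R V φ)) := by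
  simp [tdelta, mem_TSat_orf, mem_TSat_dia, mem_TSat_bdia]

end Sem
section Struct
variable {X : Type*} {R : X → X → Prop} {A : Set (Set X)}

lemma refl_of_T (hGF : IsGeneralFrame R A) (ht : Tight R A) (hT : GValid R A axT) :
    ∀ w, R w w := by
  intro w
  by_contra hww
  obtain ⟨U, hUA, V, hVA, ⟨hwU, -⟩, ⟨-, hwR⟩⟩ := ht w w hww
  have := hT (fun _ => Rimg R U) (fun _ => hGF.fimg_mem U hUA) w
  rw [show axT = TForm.imp (TForm.box (TForm.var 0)) (TForm.var 0) from rfl, mem_TSat_imp] at this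
  exact hwR (this (mem_TSat_box.2 fun v hv => ⟨w, hwU, hv⟩))

lemma trans_of_4 (hGF : IsGeneralFrame R A) (ht : Tight R A) (h4 : GValid R A ax4) :
    ∀ a b c, R a b → R b c → R a c := by
  intro a b c hab hbc
  by_contra hac
  obtain ⟨U, hUA, V, hVA, ⟨haU, -⟩, ⟨-, hcR⟩⟩ := ht a c hac
  have := h4 (fun _ => Rimg R U) (fun _ => hGF.fimg_mem U hUA) a
  rw [show ax4 = TForm.imp (TForm.box (TForm.var 0)) (TForm.box (TForm.box (TForm.var 0))) from rfl, mem_TSat_imp] at this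
  have h2 := this (mem_TSat_box.2 fun v hv => ⟨a, haU, hv⟩)
  rw [mem_TSat_box] at h2
  have h3 := h2 b hab
  rw [mem_TSat_box] at h3
  exact hcR (h3 c hbc)

/-- comparability of successors via `bwp 1` -/
lemma succ_comp (hGF : IsGeneralFrame R A) (ht : Tight R A)
    (hrefl : ∀ w, R w w) (hp : GValid R A (bwp 1)) :
    ∀ a y z, R a y → R a z → R y z ∨ R z y := by
  intro a y z hay haz
  by_contra hcon
  push_neg at hcon
  obtain ⟨hyz, hzy⟩ := hcon
  obtain ⟨U₁, hU₁A, V₁, hV₁A, ⟨hyU₁, -⟩, ⟨-, hzR₁⟩⟩ := ht y z hyz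
  obtain ⟨U₂, hU₂A, V₂, hV₂A, ⟨hzU₂, -⟩, ⟨-, hyR₂⟩⟩ := ht z y hzy
  set p₀ : Set X := U₁ ∩ (Rimg R U₂)ᶜ with hp₀
  set p₁ : Set X := U₂ ∩ (Rimg R U₁)ᶜ with hp₁
  have hp₀A : p₀ ∈ A := hGF.inter_mem _ hU₁A _ (hGF.compl_mem _ (hGF.fimg_mem _ hU₂A))
  have hp₁A : p₁ ∈ A := hGF.inter_mem _ hU₂A _ (hGF.compl_mem _ (hGF.fimg_mem _ hU₁A))
  set V : ℕ → Set X := fun n => if n = 0 then p₀ else if n = 1 then p₁ else ∅ with hV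
  have hVA : ∀ n, V n ∈ A := by
    intro n
    simp only [hV]
    split
    · exact hp₀A
    · split
      · exact hp₁A
      · exact hGF.empty_mem
  have hbwp : bwp 1 = TForm.imp (andf (dia (TForm.var 0)) (andf (dia (TForm.var 1)) TForm.top))
      (orf (dia (andf (TForm.var 0) (orf (TForm.var 1) (dia (TForm.var 1)))))
        (orf (dia (andf (TForm.var 1) (orf (TForm.var 0) (dia (TForm.var 0))))) TForm.bot)) := by
    decide
  have := hp V hVA a
  rw [hbwp, mem_TSat_imp] at this
  have hV0 : V 0 = p₀ := rfl
  have hV1 : V 1 = p₁ := rfl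
  have hprem : a ∈ TSat R V (andf (dia (TForm.var 0)) (andf (dia (TForm.var 1)) TForm.top)) := by
    rw [mem_TSat_andf, mem_TSat_dia, mem_TSat_andf, mem_TSat_dia]
    refine ⟨⟨y, hay, ?_⟩, ⟨z, haz, ?_⟩, ?_⟩
    · show y ∈ V 0
      rw [hV0]; exact ⟨hyU₁, hyR₂⟩
    · show z ∈ V 1
      rw [hV1]; exact ⟨hzU₂, hzR₁⟩
    · show a ∈ TSat R V TForm.top
      rw [TForm.top, mem_TSat_neg]; simp [TSat]
  have hconc := this hprem
  rw [mem_TSat_orf, mem_TSat_orf] at hconc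
  rcases hconc with h | h | h
  · rw [mem_TSat_dia] at h
    obtain ⟨v, hav, hv⟩ := h
    rw [mem_TSat_andf, mem_TSat_orf, mem_TSat_dia] at hv
    obtain ⟨hv0, hv1⟩ := hv
    have hv0' : v ∈ p₀ := hv0
    rcases hv1 with h1 | ⟨u, hvu, hu1⟩
    · have : v ∈ p₁ := h1
      exact this.2 ⟨v, hv0'.1, hrefl v⟩
    · have hu1' : u ∈ p₁ := hu1
      exact hu1'.2 ⟨v, hv0'.1, hvu⟩
  · rw [mem_TSat_dia] at h
    obtain ⟨v, hav, hv⟩ := h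
    rw [mem_TSat_andf, mem_TSat_orf, mem_TSat_dia] at hv
    obtain ⟨hv1, hv0⟩ := hv
    have hv1' : v ∈ p₁ := hv1
    rcases hv0 with h0 | ⟨u, hvu, hu0⟩
    · have : v ∈ p₀ := h0
      exact this.2 ⟨v, hv1'.1, hrefl v⟩
    · have hu0' : u ∈ p₀ := hu0
      exact hu0'.2 ⟨v, hv1'.1, hvu⟩
  · simp [TSat] at h

/-- comparability of predecessors via `bwm 1` -/
lemma pred_comp (hGF : IsGeneralFrame R A) (ht : Tight R A)
    (hrefl : ∀ w, R w w) (hm : GValid R A (bwm 1)) :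
    ∀ a y z, R y a → R z a → R y z ∨ R z y := by
  intro a y z hya hza
  by_contra hcon
  push_neg at hcon
  obtain ⟨hyz, hzy⟩ := hcon
  obtain ⟨U₁, hU₁A, V₁, hV₁A, ⟨-, hyF₁⟩, ⟨hzV₁, -⟩⟩ := ht y z hyz
  obtain ⟨U₂, hU₂A, V₂, hV₂A, ⟨-, hzF₂⟩, ⟨hyV₂, -⟩⟩ := ht z y hzy
  -- hyF₁ : y ∉ Rimg (flip R) V₁ ; hzV₁ : z ∈ V₁ ; hzF₂ : z ∉ Rimg (flip R) V₂ ; hyV₂ : y ∈ V₂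
  set p₀ : Set X := V₂ ∩ (Rimg (flip R) V₁)ᶜ with hp₀
  set p₁ : Set X := V₁ ∩ (Rimg (flip R) V₂)ᶜ with hp₁
  have hp₀A : p₀ ∈ A := hGF.inter_mem _ hV₂A _ (hGF.compl_mem _ (hGF.bimg_mem _ hV₁A))
  have hp₁A : p₁ ∈ A := hGF.inter_mem _ hV₁A _ (hGF.compl_mem _ (hGF.bimg_mem _ hV₂A))
  set V : ℕ → Set X := fun n => if n = 0 then p₀ else if n = 1 then p₁ else ∅ with hV
  have hVA : ∀ n, V n ∈ A := by
    intro n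
    simp only [hV]
    split
    · exact hp₀A
    · split
      · exact hp₁A
      · exact hGF.empty_mem
  have hbwm : bwm 1 = TForm.imp (andf (TForm.bdia (TForm.var 0)) (andf (TForm.bdia (TForm.var 1)) TForm.top))
      (orf (TForm.bdia (andf (TForm.var 0) (orf (TForm.var 1) (TForm.bdia (TForm.var 1)))))
        (orf (TForm.bdia (andf (TForm.var 1) (orf (TForm.var 0) (TForm.bdia (TForm.var 0))))) TForm.bot)) := by
    decide
  have := hm V hVA a
  rw [hbwm, mem_TSat_imp] at this
  have hy0 : y ∈ p₀ := ⟨hyV₂, hyF₁⟩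
  have hz1 : z ∈ p₁ := ⟨hzV₁, hzF₂⟩
  have hprem : a ∈ TSat R V (andf (TForm.bdia (TForm.var 0)) (andf (TForm.bdia (TForm.var 1)) TForm.top)) := by
    rw [mem_TSat_andf, mem_TSat_bdia, mem_TSat_andf, mem_TSat_bdia]
    refine ⟨⟨y, hya, hy0⟩, ⟨z, hza, hz1⟩, ?_⟩
    show a ∈ TSat R V TForm.top
    rw [TForm.top, mem_TSat_neg]; simp [TSat]
  have hconc := this hprem
  rw [mem_TSat_orf, mem_TSat_orf] at hconc
  rcases hconc with h | h | h
  · rw [mem_TSat_bdia] at h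
    obtain ⟨v, hva, hv⟩ := h
    rw [mem_TSat_andf, mem_TSat_orf, mem_TSat_bdia] at hv
    obtain ⟨hv0, hv1⟩ := hv
    have hv0' : v ∈ p₀ := hv0
    rcases hv1 with h1 | ⟨u, huv, hu1⟩
    · have hv1' : v ∈ p₁ := h1
      exact hv1'.2 ⟨v, hv0'.1, hrefl v⟩
    · have hu1' : u ∈ p₁ := hu1
      exact hu1'.2 ⟨v, hv0'.1, huv⟩
  · rw [mem_TSat_bdia] at h
    obtain ⟨v, hva, hv⟩ := h
    rw [mem_TSat_andf, mem_TSat_orf, mem_TSat_bdia] at hv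
    obtain ⟨hv1, hv0⟩ := hv
    have hv1' : v ∈ p₁ := hv1
    rcases hv0 with h0 | ⟨u, huv, hu0⟩
    · have hv0' : v ∈ p₀ := h0
      exact hv0'.2 ⟨v, hv1'.1, hrefl v⟩
    · have hu0' : u ∈ p₀ := hu0
      exact hu0'.2 ⟨v, hv1'.1, huv⟩
  · simp [TSat] at h

end Struct
section Zdg
variable {X : Type*} {R : X → X → Prop} {A : Set (Set X)}

lemma rsharp_two_sub (hGF : IsGeneralFrame R A) (ht : Tight R A)
    (hrefl : ∀ w, R w w) (hz : GValid R A (bz 1)) :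
    ∀ u v, v ∈ rsharp R 2 u → v ∈ rsharp R 1 u := by
  intro u v hv2
  by_contra hv1
  have hne : v ≠ u := by rintro rfl; exact hv1 (Or.inl (Or.inl rfl))
  have huv : ¬ R u v := fun h => hv1 (Or.inl (Or.inr ⟨u, rfl, h⟩))
  have hvu : ¬ R v u := fun h => hv1 (Or.inr ⟨u, rfl, h⟩)
  obtain ⟨U₁, hU₁A, V₁, hV₁A, ⟨huU₁, -⟩, ⟨-, hvR₁⟩⟩ := ht u v huv
  obtain ⟨U₂, hU₂A, V₂, hV₂A, ⟨-, hvF₂⟩, ⟨huV₂, -⟩⟩ := ht v u hvu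
  set U : Set X := U₁ ∩ V₂ with hU
  have hUA : U ∈ A := hGF.inter_mem _ hU₁A _ hV₂A
  have huU : u ∈ U := ⟨huU₁, huV₂⟩
  set V : ℕ → Set X := fun _ => U with hV
  have hmemU : ∀ ψ, TSat R V ψ = TSat R V (TForm.var 0) → True := fun _ _ => trivial
  have hbz : bz 1 = TForm.imp (tdelta 2 (TForm.var 0)) (tdelta 1 (TForm.var 0)) := rfl
  have key := hz V (fun _ => hUA) v
  rw [hbz, mem_TSat_imp] at key
  -- membership in Dset for points of rsharp 1 u
  have hD : ∀ z, z ∈ rsharp R 1 u → z ∈ TSat R V (tdelta 1 (TForm.var 0)) := by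
    intro z hz1
    rw [mem_TSat_td1]
    rcases hz1 with (hz | ⟨y, hy, hyz⟩) | ⟨y, hy, hyz⟩
    · simp only [rsharp, Set.mem_singleton_iff] at hz
      left; rw [hz]; exact huU
    · simp only [rsharp, Set.mem_singleton_iff] at hy
      rw [hy] at hyz; right; right; exact ⟨u, hyz, huU⟩
    · simp only [rsharp, Set.mem_singleton_iff] at hy
      rw [hy] at hyz; right; left; exact ⟨u, hyz, huU⟩
  have hv2' : v ∈ TSat R V (tdelta 2 (TForm.var 0)) := by
    have : tdelta 2 (TForm.var 0) = TForm.orf (tdelta 1 (TForm.var 0))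
        (TForm.orf (TForm.dia (tdelta 1 (TForm.var 0))) (TForm.bdia (tdelta 1 (TForm.var 0)))) := rfl
    rw [this, mem_TSat_orf, mem_TSat_orf, mem_TSat_dia, mem_TSat_bdia]
    rcases hv2 with (h | ⟨y, hy, hyv⟩) | ⟨y, hy, hyv⟩
    · exact absurd h hv1
    · exact Or.inr (Or.inr ⟨y, hyv, hD y hy⟩)
    · exact Or.inr (Or.inl ⟨y, hyv, hD y hy⟩)
  have hcon := key hv2'
  rw [mem_TSat_td1] at hcon
  rcases hcon with h | ⟨y, hvy, hy⟩ | ⟨y, hyv, hy⟩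
  · exact hvR₁ ⟨v, (show v ∈ U from h).1, hrefl v⟩
  · exact hvF₂ ⟨y, (show y ∈ U from hy).2, hvy⟩
  · exact hvR₁ ⟨y, (show y ∈ U from hy).1, hyv⟩

lemma Rimg_mono {U U' : Set X} (h : U ⊆ U') : Rimg R U ⊆ Rimg R U' := by
  rintro z ⟨y, hy, hyz⟩; exact ⟨y, h hy, hyz⟩

lemma rsharp_sub_one (hGF : IsGeneralFrame R A) (ht : Tight R A)
    (hrefl : ∀ w, R w w) (hz : GValid R A (bz 1)) (u : X) :
    ∀ k, rsharp R k u ⊆ rsharp R 1 u := by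
  intro k
  induction k with
  | zero => intro z hz'; exact Or.inl (Or.inl hz')
  | succ k ih =>
    intro z hz'
    rcases hz' with (h | h) | h
    · exact ih h
    · exact rsharp_two_sub hGF ht hrefl hz u z (Or.inl (Or.inr (Rimg_mono ih h)))
    · exact rsharp_two_sub hGF ht hrefl hz u z (Or.inr (Rimg_mono ih h))

end Zdg
section Transfer

lemma finset_union_mem {X : Type*} {R : X → X → Prop} {A : Set (Set X)}
    (hGF : IsGeneralFrame R A) {ι : Type*} [DecidableEq ι] (s : Finset ι) (C : ι → Set X)
    (hC : ∀ g, C g ∈ A) : {u | ∃ g ∈ s, u ∈ C g} ∈ A := by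
  classical
  induction s using Finset.induction_on with
  | empty => simpa using hGF.empty_mem
  | insert a s ha ih =>
    have heq : {u | ∃ g ∈ insert a s, u ∈ C g}
        = ((C a)ᶜ ∩ {u | ∃ g ∈ s, u ∈ C g}ᶜ)ᶜ := by
      ext u; simp; tauto
    rw [heq]
    exact hGF.compl_mem _ (hGF.inter_mem _ (hGF.compl_mem _ (hC a)) _ (hGF.compl_mem _ ih))

lemma chain_transfer (m : ℕ) (hm : 0 < m) {X : Type*} (R : X → X → Prop) (A : Set (Set X))
    (hGF : IsGeneralFrame R A) (ht : Tight R A)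
    (hTv : GValid R A axT) (h4v : GValid R A ax4) (hzv : GValid R A (bz 1))
    (hpv : GValid R A (bwp 1)) (hmv : GValid R A (bwm 1))
    (c : Fin m → X)
    (hchain : ∀ i j : Fin m, i < j → R (c i) (c j) ∧ ¬ R (c j) (c i))
    (φ : TForm) (hφ : GValid R A φ) : Valid (chainR m) φ := by
  classical
  intro W k
  by_contra hk
  have hrefl := refl_of_T hGF ht hTv
  have htrans := trans_of_4 hGF ht h4v
  set c0 : X := c ⟨0, hm⟩ with hc0
  set Y : Set X := rsharpOmega R c0 with hYdef
  have hYmem : ∀ w, w ∈ Y ↔ ∃ k, w ∈ rsharp R k c0 := by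
    intro w; simp [hYdef, rsharpOmega, Set.mem_iUnion]
  have hYsucc : ∀ w v, w ∈ Y → R w v → v ∈ Y := by
    intro w v hw hwv
    rw [hYmem] at hw ⊢
    obtain ⟨k', hk'⟩ := hw
    exact ⟨k' + 1, Or.inl (Or.inr ⟨w, hk', hwv⟩)⟩
  have hYpred : ∀ w v, w ∈ Y → R v w → v ∈ Y := by
    intro w v hw hvw
    rw [hYmem] at hw ⊢
    obtain ⟨k', hk'⟩ := hw
    exact ⟨k' + 1, Or.inr ⟨w, hk', hvw⟩⟩
  have h0Y : c0 ∈ Y := by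
    rw [hYmem]; exact ⟨0, rfl⟩
  have hY1 : ∀ w ∈ Y, w = c0 ∨ R c0 w ∨ R w c0 := by
    intro w hw
    rw [hYmem] at hw
    obtain ⟨k', hk'⟩ := hw
    have h1 := rsharp_sub_one hGF ht hrefl hzv c0 k' hk'
    rcases h1 with (h | ⟨y, hy, hyw⟩) | ⟨y, hy, hyw⟩
    · left; simpa [rsharp] using h
    · right; left
      simp only [rsharp, Set.mem_singleton_iff] at hy
      rw [hy] at hyw; exact hyw
    · right; right
      simp only [rsharp, Set.mem_singleton_iff] at hy
      rw [hy] at hyw; exact hyw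
  have hcY : ∀ j : Fin m, c j ∈ Y := by
    intro j
    by_cases hj0 : j.val = 0
    · have : j = ⟨0, hm⟩ := Fin.ext hj0
      rw [this]; exact h0Y
    · have hj : (⟨0, hm⟩ : Fin m) < j := by
        rw [Fin.lt_def]
        exact Nat.pos_of_ne_zero hj0
      exact hYsucc c0 (c j) h0Y (hchain _ j hj).1
  have hcomp : ∀ w ∈ Y, R c0 w ∨ R w c0 := by
    intro w hw
    rcases hY1 w hw with h | h | h
    · left; rw [h]; exact hrefl _
    · left; exact h
    · right; exact h
  have htotal : ∀ w ∈ Y, ∀ v ∈ Y, R w v ∨ R v w := by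
    intro w hw v hv
    rcases hcomp w hw with h1 | h1 <;> rcases hcomp v hv with h2 | h2
    · exact succ_comp hGF ht hrefl hpv c0 w v h1 h2
    · right; exact htrans _ _ _ h2 h1
    · left; exact htrans _ _ _ h1 h2
    · exact pred_comp hGF ht hrefl hmv c0 w v h1 h2
  have hcR : ∀ i j : Fin m, i ≤ j → R (c i) (c j) := by
    intro i j hij
    rcases eq_or_lt_of_le hij with h | h
    · rw [h]; exact hrefl _
    · exact (hchain i j h).1
  -- separation sets
  have hsep : ∀ (i : ℕ) (_ : i + 1 < m), ∃ T, T ∈ A ∧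
      (∀ w, R w (c ⟨i, by omega⟩) → w ∈ T) ∧
      (∀ w (h : i + 1 < m), w ∈ T → ¬ R (c ⟨i+1, h⟩) w) ∧
      (∀ u w, R u w → w ∈ T → u ∈ T) := by
    intro i h
    have hlt : (⟨i, by omega⟩ : Fin m) < ⟨i+1, h⟩ := by simp [Fin.lt_def]
    obtain ⟨hR1, hR2⟩ := hchain _ _ hlt
    obtain ⟨U, hUA, Vs, hVsA, ⟨-, hF⟩, ⟨hciV, -⟩⟩ := ht (c ⟨i+1, h⟩) (c ⟨i, by omega⟩) hR2
    refine ⟨Rimg (flip R) Vs, hGF.bimg_mem _ hVsA, ?_, ?_, ?_⟩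
    · intro w hw
      exact ⟨c ⟨i, by omega⟩, hciV, hw⟩
    · intro w _ hw hRw
      obtain ⟨v, hvV, hwv⟩ := hw
      exact hF ⟨v, hvV, htrans _ _ _ hRw hwv⟩
    · intro u w huw hw
      obtain ⟨v, hvV, hwv⟩ := hw
      exact ⟨v, hvV, htrans _ _ _ huw hwv⟩
  set D : ℕ → Set X := fun i => if h : i + 1 < m then Classical.choose (hsep i h) else Set.univ
    with hDdef
  have hunivA : Set.univ ∈ A := by
    have := hGF.compl_mem ∅ hGF.empty_mem
    simpa using this
  have hDspec : ∀ i (h : i + 1 < m), D i ∈ A ∧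
      (∀ w, R w (c ⟨i, by omega⟩) → w ∈ D i) ∧
      (∀ w (h' : i + 1 < m), w ∈ D i → ¬ R (c ⟨i+1, h'⟩) w) ∧
      (∀ u w, R u w → w ∈ D i → u ∈ D i) := by
    intro i h
    simp only [hDdef, dif_pos h]
    exact Classical.choose_spec (hsep i h)
  have hDA : ∀ i, D i ∈ A := by
    intro i
    by_cases h : i + 1 < m
    · exact (hDspec i h).1
    · simp only [hDdef, dif_neg h]; exact hunivA
  have hDmem : ∀ i (hi : i < m) w, R w (c ⟨i, hi⟩) → w ∈ D i := by
    intro i hi w hw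
    by_cases h : i + 1 < m
    · exact (hDspec i h).2.1 w hw
    · simp only [hDdef, dif_neg h]; trivial
  have hDnot : ∀ i (h : i + 1 < m) w, w ∈ D i → ¬ R (c ⟨i+1, h⟩) w := by
    intro i h w hw
    exact (hDspec i h).2.2.1 w h hw
  have hDup : ∀ i u w, R u w → w ∈ D i → u ∈ D i := by
    intro i u w huw hw
    by_cases h : i + 1 < m
    · exact (hDspec i h).2.2.2 u w huw hw
    · simp only [hDdef, dif_neg h]; trivial
  have hDtop : ∀ w, w ∈ D (m - 1) := by
    intro w
    have h : ¬ (m - 1 + 1 < m) := by omega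
    simp only [hDdef, dif_neg h]; trivial
  have hDc : ∀ i (hi : i < m) j (hj : j < m), (c ⟨j, hj⟩ ∈ D i ↔ j ≤ i) := by
    intro i hi j hj
    constructor
    · intro hmem
      by_contra hij
      push_neg at hij
      by_cases h : i + 1 < m
      · exact hDnot i h _ hmem (hcR ⟨i+1, h⟩ ⟨j, hj⟩ (by simp [Fin.le_def]; omega))
      · omega
    · intro hij
      exact hDmem i hi _ (hcR ⟨j, hj⟩ ⟨i, hi⟩ (by simp [Fin.le_def]; omega))
  have hDex : ∀ w, ∃ i, w ∈ D i := fun w => ⟨m - 1, hDtop w⟩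
  set lv : X → ℕ := fun w => Nat.find (hDex w) with hlvdef
  have hlD : ∀ w, w ∈ D (lv w) := fun w => Nat.find_spec (hDex w)
  have hlle : ∀ w i, w ∈ D i → lv w ≤ i := fun w i h => Nat.find_le h
  have hlbound : ∀ w, lv w ≤ m - 1 := fun w => hlle w _ (hDtop w)
  have hlmono : ∀ u w, R u w → lv u ≤ lv w := fun u w h => hlle u _ (hDup _ u w h (hlD w))
  have hDmono : ∀ w ∈ Y, ∀ i j, i ≤ j → w ∈ D i → w ∈ D j := by
    intro w hw i j hij hwi
    rcases eq_or_lt_of_le hij with rfl | hij'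
    · exact hwi
    by_cases h : j + 1 < m
    · have hi1 : i + 1 < m := by omega
      have h1 := hDnot i hi1 w hwi
      have h2 : R w (c ⟨i+1, hi1⟩) := by
        rcases htotal w hw _ (hcY ⟨i+1, hi1⟩) with h' | h'
        · exact h'
        · exact absurd h' h1
      exact hDmem j (by omega) w (htrans _ _ _ h2 (hcR ⟨i+1, hi1⟩ ⟨j, by omega⟩
        (by simp [Fin.le_def]; omega)))
    · simp only [hDdef, dif_neg h]; trivial
  have hlchar : ∀ w ∈ Y, ∀ i, (w ∈ D i ↔ lv w ≤ i) :=
    fun w hw i => ⟨hlle w i, fun h => hDmono w hw _ i h (hlD w)⟩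
  have hlc : ∀ j (hj : j < m), lv (c ⟨j, hj⟩) = j := by
    intro j hj
    have h1 : lv (c ⟨j, hj⟩) ≤ j := hlle _ _ ((hDc j hj j hj).2 le_rfl)
    have h2 : ¬ (lv (c ⟨j, hj⟩) < j) := by
      intro hlt
      have h3 := (hDc (lv (c ⟨j, hj⟩)) (by omega) j hj).1 (hlD _)
      omega
    omega
  set f : X → Fin m := fun w => ⟨m - 1 - lv w, by omega⟩ with hfdef
  have hfval : ∀ w, (f w).val = m - 1 - lv w := fun w => rfl
  have hfc : ∀ j (hj : j < m), (f (c ⟨j, hj⟩)).val = m - 1 - j := by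
    intro j hj
    rw [hfval, hlc j hj]
  have hfmono : ∀ u w, R u w → (f w).val ≤ (f u).val := by
    intro u w h
    rw [hfval, hfval]
    have := hlmono u w h
    omega
  -- lifts
  have hsucc_lift : ∀ w ∈ Y, ∀ g : Fin m, g.val ≤ (f w).val → ∃ v, v ∈ Y ∧ R w v ∧ f v = g := by
    intro w hw g hg
    rcases eq_or_lt_of_le hg with heq | hlt
    · exact ⟨w, hw, hrefl w, by apply Fin.ext; omega⟩
    · have hb := hlbound w
      have hgl := g.isLt
      rw [hfval] at hlt
      have hll : lv w < m - 1 - g.val := by omega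
      have hjm : m - 1 - g.val < m := by omega
      have hl1 : lv w + 1 < m := by omega
      have h1 : ¬ R (c ⟨lv w + 1, hl1⟩) w := hDnot (lv w) hl1 w (hlD w)
      have h2 : R w (c ⟨lv w + 1, hl1⟩) := by
        rcases htotal w hw _ (hcY ⟨lv w + 1, hl1⟩) with h' | h'
        · exact h'
        · exact absurd h' h1
      have h3 : R w (c ⟨m - 1 - g.val, hjm⟩) :=
        htrans _ _ _ h2 (hcR _ _ (by simp [Fin.le_def]; omega))
      refine ⟨c ⟨m - 1 - g.val, hjm⟩, hcY _, h3, ?_⟩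
      apply Fin.ext
      rw [hfc _ hjm]
      omega
  have hpred_lift : ∀ w ∈ Y, ∀ g : Fin m, (f w).val ≤ g.val → ∃ v, v ∈ Y ∧ R v w ∧ f v = g := by
    intro w hw g hg
    rcases eq_or_lt_of_le hg with heq | hlt
    · exact ⟨w, hw, hrefl w, by apply Fin.ext; omega⟩
    · have hb := hlbound w
      have hgl := g.isLt
      rw [hfval] at hlt
      have hjm : m - 1 - g.val < m := by omega
      have hjl : m - 1 - g.val < lv w := by omega
      have h1 : c ⟨m - 1 - g.val, hjm⟩ ∈ Y := hcY _
      have h2 : ¬ w ∈ D (m - 1 - g.val) := by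
        intro h
        have := hlle w _ h
        omega
      have h3 : ¬ R w (c ⟨m - 1 - g.val, hjm⟩) := fun h => h2 (hDmem _ hjm w h)
      have h4 : R (c ⟨m - 1 - g.val, hjm⟩) w := by
        rcases htotal w hw _ h1 with h' | h'
        · exact absurd h' h3
        · exact h'
      refine ⟨c ⟨m - 1 - g.val, hjm⟩, h1, h4, ?_⟩
      apply Fin.ext
      rw [hfc _ hjm]
      omega
  -- fibers
  set Dlt : ℕ → Set X := fun i => if i = 0 then (∅ : Set X) else D (i - 1) with hDltdef
  have hDltA : ∀ i, Dlt i ∈ A := by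
    intro i
    by_cases h : i = 0
    · simp only [hDltdef, if_pos h]; exact hGF.empty_mem
    · simp only [hDltdef, if_neg h]; exact hDA _
  set B : Fin m → Set X := fun g => D (m - 1 - g.val) ∩ (Dlt (m - 1 - g.val))ᶜ with hBdef
  have hBA : ∀ g, B g ∈ A := fun g => hGF.inter_mem _ (hDA _) _ (hGF.compl_mem _ (hDltA _))
  have hBmem : ∀ w ∈ Y, ∀ g : Fin m, (w ∈ B g ↔ f w = g) := by
    intro w hw g
    have hb := hlbound w
    have hgl := g.isLt
    constructor
    · rintro ⟨h1, h2⟩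
      have hle : lv w ≤ m - 1 - g.val := (hlchar w hw _).1 h1
      have hgt : m - 1 - g.val ≤ lv w := by
        by_cases hz0 : m - 1 - g.val = 0
        · omega
        · by_contra hlt'
          apply h2
          simp only [hDltdef, if_neg hz0]
          exact (hlchar w hw _).2 (by omega)
      apply Fin.ext
      rw [hfval]
      omega
    · intro hfg
      have hlw : lv w = m - 1 - g.val := by
        have : (f w).val = g.val := by rw [hfg]
        rw [hfval] at this
        omega
      constructor
      · exact (hlchar w hw _).2 (by omega)
      · by_cases hz0 : m - 1 - g.val = 0
        · simp only [hDltdef, if_pos hz0]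
          exact Set.notMem_empty w
        · simp only [hDltdef, if_neg hz0]
          intro hmem
          have := (hlchar w hw _).1 hmem
          omega
  -- valuation
  set V : ℕ → Set X := fun n => {u | ∃ g ∈ Finset.univ.filter (fun g : Fin m => g ∈ W n), u ∈ B g}
    with hVdef
  have hVA : ∀ n, V n ∈ A := fun n => finset_union_mem hGF _ _ hBA
  have hVvar : ∀ w ∈ Y, ∀ n, (w ∈ V n ↔ f w ∈ W n) := by
    intro w hw n
    constructor
    · rintro ⟨g, hgW, hgB⟩
      simp only [Finset.mem_filter] at hgW
      rw [(hBmem w hw g).1 hgB]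
      exact hgW.2

    · intro h
      exact ⟨f w, by simp only [Finset.mem_filter]; exact ⟨Finset.mem_univ _, h⟩,
        (hBmem w hw (f w)).2 rfl⟩
  -- truth lemma
  have truth : ∀ ψ : TForm, ∀ w ∈ Y, (w ∈ TSat R V ψ ↔ f w ∈ TSat (chainR m) W ψ) := by
    intro ψ
    induction ψ with
    | var n => intro w hw; exact hVvar w hw n
    | bot => intro w hw; simp [TSat]
    | imp φ1 φ2 ih1 ih2 =>
      intro w hw
      rw [mem_TSat_imp, mem_TSat_imp, ih1 w hw, ih2 w hw]
    | box ψ ih =>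
      intro w hw
      rw [mem_TSat_box, mem_TSat_box]
      constructor
      · intro h g hg
        have hg' : g.val ≤ (f w).val := hg
        obtain ⟨v, hvY, hwv, hfv⟩ := hsucc_lift w hw g hg'
        rw [← hfv]
        exact (ih v hvY).1 (h v hwv)
      · intro h v hwv
        have hvY := hYsucc w v hw hwv
        have hle : chainR m (f w) (f v) := hfmono w v hwv
        exact (ih v hvY).2 (h (f v) hle)
    | bdia ψ ih =>
      intro w hw
      rw [mem_TSat_bdia, mem_TSat_bdia]
      constructor
      · rintro ⟨v, hvw, hv⟩
        have hvY := hYpred w v hw hvw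
        have hle : chainR m (f v) (f w) := hfmono v w hvw
        exact ⟨f v, hle, (ih v hvY).1 hv⟩
      · rintro ⟨g, hg, hgSat⟩
        have hg' : (f w).val ≤ g.val := hg
        obtain ⟨v, hvY, hvw, hfv⟩ := hpred_lift w hw g hg'
        exact ⟨v, hvw, (ih v hvY).2 (by rw [hfv]; exact hgSat)⟩
  -- conclusion
  have hkl := k.isLt
  have hjm : m - 1 - k.val < m := by omega
  have hmain := hφ V hVA (c ⟨m - 1 - k.val, hjm⟩)
  have hfin := (truth φ (c ⟨m - 1 - k.val, hjm⟩) (hcY _)).1 hmain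
  have hfk : f (c ⟨m - 1 - k.val, hjm⟩) = k := by
    apply Fin.ext
    rw [hfc _ hjm]
    omega
  rw [hfk] at hfin
  exact hk hfin

end Transfer
lemma mem_TLogicGen {Γ : Set TForm} {φ : TForm} (h : φ ∈ Γ) : φ ∈ TLogicGen Γ :=
  fun _ hL => hL.2 h

/-- for a tense logic `L ⊇ S4.3_t`, `L ⊆ L^↑` iff `dep(L) = ℵ0`. -/
theorem statement12 (L : Set TForm) (hL : TenseLogic L) (hext : S43t ⊆ L) :
    L ⊆ Lup ↔ DepInfinite L := by
  constructor
  · -- forward: L ⊆ Lup implies dep(L) = ℵ0, witnessed by the chains themselves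
    intro hsub n
    refine ⟨Fin (n+1), chainR (n+1), Set.univ, ⟨⟨0, n.succ_pos⟩⟩,
      ⟨trivial, fun _ _ _ _ => trivial, fun _ _ => trivial, fun _ _ => trivial,
        fun _ _ => trivial⟩, ?_, ?_, ?_, ?_⟩
    · intro x y hxy
      exact ⟨{x}, trivial, rfl, fun h => hxy (Set.mem_singleton_iff.1 h).symm⟩
    · intro x y hxy
      refine ⟨{x}, trivial, {y}, trivial, ⟨rfl, ?_⟩, rfl, ?_⟩
      · rintro ⟨v, hv, hvx⟩
        rw [Set.mem_singleton_iff] at hv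
        rw [hv] at hvx
        exact hxy hvx
      · rintro ⟨v, hv, hvy⟩
        rw [Set.mem_singleton_iff] at hv
        rw [hv] at hvy
        exact hxy hvy
    · intro ψ hψ Vv _ x
      have h1 : ψ ∈ Lup := hsub hψ
      exact Set.mem_iInter.1 h1 n Vv x
    · refine ⟨Fin.last n, fun i => ⟨n - 1 - i.val, by omega⟩, ?_, ?_⟩
      · intro i
        show (⟨n - 1 - i.val, by omega⟩ : Fin (n+1)) ≤ Fin.last n
        rw [Fin.le_def]
        show n - 1 - i.val ≤ n
        omega
      · intro i j hij
        have hi := i.isLt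
        have hj := j.isLt
        have hij' : i.val < j.val := hij
        constructor
        · show (⟨n - 1 - j.val, by omega⟩ : Fin (n+1)) ≤ ⟨n - 1 - i.val, by omega⟩
          rw [Fin.mk_le_mk]
          omega
        · intro h
          simp only [chainR, Fin.mk_le_mk] at h
          omega
  · -- backward: via the transfer lemma
    intro hdep φ hφ
    simp only [Lup, Set.mem_iInter]
    intro n
    obtain ⟨X, R, A, hne, hGF, hdiff, htight, hval, x, c, hcx, hchain⟩ := hdep (n+1)
    have hS : ∀ ψ ∈ ({axT, ax4, bz 1, bwp 1, bwm 1} : Set TForm), GValid R A ψ :=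
      fun ψ hψ => hval ψ (hext (mem_TLogicGen hψ))
    exact chain_transfer (n+1) n.succ_pos R A hGF htight
      (hS axT (by left; rfl))
      (hS ax4 (by right; left; rfl))
      (hS (bz 1) (by right; right; left; rfl))
      (hS (bwp 1) (by right; right; right; left; rfl))
      (hS (bwm 1) (by right; right; right; right; rfl))
      c hchain φ (hval φ hφ)
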